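/- Let P be a lattice polytope spanning a lattice M. Then the following are equivalent: (1) P is very ample (for all sufficiently large k, every lattice point of kP is a sum of k lattice points of P); (2) for every lattice point m ∈ P, the monoid generated by {p − m : p ∈ P ∩ M} is saturated in M; (3) for every vertex m of P, the monoid generated by {p − m : p ∈ P ∩ M} is saturated in M. -/

import Mathlib

open Pointwise
/-- The canonical embedding `ℤⁿ → ℝⁿ`. -/
def coeR (n : ℕ) (m : Fin n → ℤ) : Fin n → ℝ := fun i => (m i : ℝ)

/-- The lattice polytope spanned by a finite set of lattice points. -/
def polyHull (n : ℕ) (Pset : Finset (Fin n → ℤ)) : Set (Fin n → ℝ) :=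
  convexHull ℝ (coeR n '' ↑Pset)

/-- The lattice points of the polytope. -/
def latticePts (n : ℕ) (Pset : Finset (Fin n → ℤ)) : Set (Fin n → ℤ) :=
  {m : Fin n → ℤ | coeR n m ∈ polyHull n Pset}

/-- A submonoid `S` of `ℤⁿ` is saturated if `k • x ∈ S` with `k > 0` implies
`x ∈ S`. -/
def SaturatedIn (n : ℕ) (S : AddSubmonoid (Fin n → ℤ)) : Prop :=
  ∀ (x : Fin n → ℤ) (k : ℤ), 0 < k → k • x ∈ S → x ∈ S

/-- The monoid generated by the differences `p − m`, `p` a lattice point of the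
polytope. -/
def shiftMonoid (n : ℕ) (Pset : Finset (Fin n → ℤ)) (m : Fin n → ℤ) :
    AddSubmonoid (Fin n → ℤ) :=
  AddSubmonoid.closure {y : Fin n → ℤ | ∃ p ∈ latticePts n Pset, y = p - m}

/-- The polytope is very ample: for all large `k`, every lattice point of `kP`
is a sum of `k` lattice points of `P`. -/
def VeryAmplePoly (n : ℕ) (Pset : Finset (Fin n → ℤ)) : Prop :=
  ∃ N : ℕ, ∀ k : ℕ, N ≤ k → ∀ m : Fin n → ℤ,
    coeR n m ∈ (k : ℝ) • polyHull n Pset →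
    ∃ f : Fin k → (Fin n → ℤ), (∀ i, f i ∈ latticePts n Pset) ∧ m = ∑ i, f i

namespace Stmt18

variable {n : ℕ}

def coeHom (n : ℕ) : (Fin n → ℤ) →+ (Fin n → ℝ) where
  toFun := coeR n
  map_zero' := by funext i; simp [coeR]
  map_add' a b := by funext i; simp [coeR]

lemma coeHom_apply (z : Fin n → ℤ) : coeHom n z = coeR n z := rfl

lemma coeR_inj : Function.Injective (coeR n) := fun a b h =>
  funext fun i => Int.cast_injective (congrFun h i)

lemma coeR_sub (a b : Fin n → ℤ) : coeR n (a - b) = coeR n a - coeR n b := by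
  funext i; simp [coeR, Pi.sub_apply]

lemma coeR_zsmul (k : ℤ) (a : Fin n → ℤ) : coeR n (k • a) = (k : ℝ) • coeR n a := by
  funext i; simp [coeR, Pi.smul_apply, smul_eq_mul]

lemma coeR_nsmul (k : ℕ) (a : Fin n → ℤ) : coeR n (k • a) = (k : ℝ) • coeR n a := by
  funext i; simp [coeR, Pi.smul_apply, smul_eq_mul]

lemma exists_list_of_mem_closure {G : Set (Fin n → ℤ)} {y : Fin n → ℤ}
    (hy : y ∈ AddSubmonoid.closure G) :
    ∃ l : List (Fin n → ℤ), (∀ z ∈ l, z ∈ G) ∧ l.sum = y := by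
  induction hy using AddSubmonoid.closure_induction with
  | mem x hx => exact ⟨[x], by simpa using hx, by simp⟩
  | zero => exact ⟨[], by simp, rfl⟩
  | add x y' hx hy' ihx ihy =>
      obtain ⟨l₁, h₁, e₁⟩ := ihx
      obtain ⟨l₂, h₂, e₂⟩ := ihy
      refine ⟨l₁ ++ l₂, ?_, by simp [e₁, e₂]⟩
      intro z hz
      rcases List.mem_append.mp hz with h | h
      exacts [h₁ z h, h₂ z h]


lemma mem_shiftMonoid_of_cone (Pset : Finset (Fin n → ℤ)) (w : Fin n → ℤ)
    (hsat : SaturatedIn n (shiftMonoid n Pset w))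
    (F : Finset (Fin n → ℤ)) (hF : ∀ q ∈ F, q ∈ latticePts n Pset)
    (θ : (Fin n → ℤ) → ℝ) (hθ : ∀ q ∈ F, 0 ≤ θ q) (y : Fin n → ℤ)
    (hy : coeR n y = ∑ q ∈ F, θ q • (coeR n q - coeR n w)) :
    y ∈ shiftMonoid n Pset w := by
  classical
  set C : Fin n → ℤ := fun i => ∑ q ∈ F, |q i - w i| with hC
  set a : ℕ → (Fin n → ℤ) → ℕ := fun t q => ⌊(t : ℝ) * θ q⌋₊ with ha
  set r : ℕ → (Fin n → ℤ) := fun t => (t : ℤ) • y - ∑ q ∈ F, (a t q : ℤ) • (q - w) with hr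
  have hcoeff : ∀ (t : ℕ), ∀ q ∈ F,
      0 ≤ (t : ℝ) * θ q - a t q ∧ (t : ℝ) * θ q - a t q ≤ 1 := by
    intro t q hq
    have h0 : 0 ≤ (t : ℝ) * θ q := mul_nonneg (by positivity) (hθ q hq)
    refine ⟨by simp only [ha, sub_nonneg]; exact Nat.floor_le h0, ?_⟩
    have := Nat.lt_floor_add_one ((t : ℝ) * θ q)
    simp only [ha]
    linarith
  have hrval : ∀ t : ℕ,
      coeR n (r t) = ∑ q ∈ F, ((t : ℝ) * θ q - a t q) • (coeR n q - coeR n w) := by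
    intro t
    have e1 : coeR n (r t) =
        (t : ℝ) • coeR n y - ∑ q ∈ F, (a t q : ℝ) • (coeR n q - coeR n w) := by
      show coeHom n (r t) = _
      rw [hr]
      simp only [map_sub, map_sum]
      congr 1
      · show coeR n ((t:ℤ) • y) = _ ; rw [coeR_zsmul]; norm_num
      · refine Finset.sum_congr rfl fun q hq => ?_
        show coeR n ((a t q : ℤ) • (q - w)) = _
        rw [coeR_zsmul, coeR_sub]
        norm_num
    rw [e1, hy, Finset.smul_sum, ← Finset.sum_sub_distrib]
    refine Finset.sum_congr rfl fun q hq => ?_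
    rw [smul_smul, ← sub_smul]
  have hbox : ∀ t : ℕ, r t ∈ {z : Fin n → ℤ | ∀ i, |z i| ≤ C i} := by
    intro t i
    have h1 : ((r t) i : ℝ) = ∑ q ∈ F, ((t:ℝ) * θ q - a t q) * ((q i : ℝ) - (w i : ℝ)) := by
      have h := congrFun (hrval t) i
      simpa [coeR, Finset.sum_apply, Pi.smul_apply, smul_eq_mul, Pi.sub_apply] using h
    have h2 : |((r t) i : ℝ)| ≤ (C i : ℝ) := by
      rw [h1]
      calc |∑ q ∈ F, ((t:ℝ) * θ q - a t q) * ((q i : ℝ) - (w i : ℝ))|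
          ≤ ∑ q ∈ F, |((t:ℝ) * θ q - a t q) * ((q i : ℝ) - (w i : ℝ))| :=
            Finset.abs_sum_le_sum_abs _ _
        _ ≤ ∑ q ∈ F, |(q i : ℝ) - (w i : ℝ)| := by
            refine Finset.sum_le_sum fun q hq => ?_
            rw [abs_mul]
            have hc := hcoeff t q hq
            have : |(t:ℝ) * θ q - a t q| ≤ 1 := abs_le.mpr ⟨by linarith [hc.1], hc.2⟩
            nlinarith [abs_nonneg ((q i : ℝ) - (w i : ℝ))]
        _ = (C i : ℝ) := by
            simp only [hC]
            push_cast
            rfl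
    exact_mod_cast h2
  have hfin : {z : Fin n → ℤ | ∀ i, |z i| ≤ C i}.Finite := by
    refine (Set.Finite.pi (fun i => Set.finite_Icc (-C i) (C i))).subset ?_
    intro z hz
    simp only [Set.mem_pi, Set.mem_univ, Set.mem_Icc, forall_true_left]
    intro i
    exact abs_le.mp (hz i)
  have key : ∀ t₁ t₂ : ℕ, t₁ < t₂ → r t₁ = r t₂ → y ∈ shiftMonoid n Pset w := by
    intro t₁ t₂ hlt he
    have hmono : ∀ q ∈ F, a t₁ q ≤ a t₂ q := by
      intro q hq
      exact Nat.floor_le_floor (mul_le_mul_of_nonneg_right (by exact_mod_cast hlt.le) (hθ q hq))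
    have h' : (t₂:ℤ) • y - (t₁:ℤ) • y
        = ∑ q ∈ F, (a t₂ q : ℤ) • (q - w) - ∑ q ∈ F, (a t₁ q : ℤ) • (q - w) := by
      have h0 : (t₁:ℤ) • y - ∑ q ∈ F, (a t₁ q : ℤ) • (q - w)
          = (t₂:ℤ) • y - ∑ q ∈ F, (a t₂ q : ℤ) • (q - w) := by
        rw [hr] at he; exact he
      have h2 := congrArg Neg.neg (sub_eq_sub_iff_sub_eq_sub.mp h0)
      simpa [neg_sub] using h2
    have heq2 : ((t₂ - t₁ : ℕ) : ℤ) • y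
        = ∑ q ∈ F, ((a t₂ q - a t₁ q : ℕ) : ℤ) • (q - w) := by
      rw [Nat.cast_sub hlt.le, sub_smul, h', ← Finset.sum_sub_distrib]
      refine Finset.sum_congr rfl fun q hq => ?_
      rw [Nat.cast_sub (hmono q hq), sub_smul]
    have hmem : ((t₂ - t₁ : ℕ) : ℤ) • y ∈ shiftMonoid n Pset w := by
      rw [heq2]
      refine AddSubmonoid.sum_mem _ fun q hq => ?_
      rw [natCast_zsmul]
      have hg : q - w ∈ shiftMonoid n Pset w :=
        AddSubmonoid.subset_closure
          (show q - w ∈ {y : Fin n → ℤ | ∃ p ∈ latticePts n Pset, y = p - w} from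
            ⟨q, hF q hq, rfl⟩)
      exact nsmul_mem hg (a t₂ q - a t₁ q)
    have hpos : (0:ℤ) < ((t₂ - t₁ : ℕ) : ℤ) := by
      have : 0 < t₂ - t₁ := Nat.sub_pos_of_lt hlt
      exact_mod_cast this
    exact hsat y _ hpos hmem
  obtain ⟨t, -, t', -, hne, heq⟩ :=
    Set.infinite_univ.exists_ne_map_eq_of_mapsTo (fun t _ => hbox t) hfin
  rcases Ne.lt_or_gt hne with hlt | hlt
  · exact key t t' hlt heq
  · exact key t' t hlt heq.symm

lemma list_map_add_sum (l : List (Fin n → ℤ)) (c : Fin n → ℤ) :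
    (l.map (fun z => z + c)).sum = l.sum + l.length • c := by
  induction l with
  | nil => simp
  | cons h t ih =>
      simp only [List.map_cons, List.sum_cons, ih, List.length_cons, succ_nsmul]
      abel

lemma flatMap_replicate_sum (lst : List (Fin n → ℤ)) (f : (Fin n → ℤ) → ℕ) :
    (lst.flatMap (fun q => List.replicate (f q) q)).sum
      = (lst.map (fun q => f q • q)).sum := by
  induction lst with
  | nil => rfl
  | cons h t ih =>
      simp only [List.flatMap_cons, List.sum_append, ih, List.map_cons, List.sum_cons,
        List.sum_replicate]

open Classical in
noncomputable def lenOf (Pset : Finset (Fin n → ℤ)) (w y : Fin n → ℤ) : ℕ :=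
  if h : y ∈ shiftMonoid n Pset w then (exists_list_of_mem_closure h).choose.length else 0

lemma lenOf_spec {Pset : Finset (Fin n → ℤ)} {w y : Fin n → ℤ}
    (h : y ∈ shiftMonoid n Pset w) :
    ∃ l : List (Fin n → ℤ), (∀ z ∈ l, ∃ p ∈ latticePts n Pset, z = p - w) ∧ l.sum = y ∧
      l.length = lenOf Pset w y := by
  obtain ⟨h1, h2⟩ := (exists_list_of_mem_closure h).choose_spec
  exact ⟨_, h1, h2, by rw [lenOf, dif_pos h]⟩

lemma mem_latticePts_of_mem_Pset (Pset : Finset (Fin n → ℤ)) {q : Fin n → ℤ}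
    (hq : q ∈ Pset) : q ∈ latticePts n Pset :=
  subset_convexHull ℝ _ (Set.mem_image_of_mem _ hq)

open Classical in
noncomputable def extVerts (Pset : Finset (Fin n → ℤ)) : Finset (Fin n → ℤ) :=
  Pset.filter (fun q => coeR n q ∈ Set.extremePoints ℝ (polyHull n Pset))

lemma polyHull_eq_vertHull (Pset : Finset (Fin n → ℤ)) :
    polyHull n Pset = convexHull ℝ (coeR n '' ↑(extVerts Pset)) := by
  classical
  have hcpt : IsCompact (polyHull n Pset) :=
    (Pset.finite_toSet.image (coeR n)).isCompact_convexHull ℝ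
  have hKM := closure_convexHull_extremePoints hcpt (convex_convexHull ℝ _)
  have hexteq : (polyHull n Pset).extremePoints ℝ = coeR n '' ↑(extVerts Pset) := by
    ext x
    constructor
    · intro hx
      obtain ⟨q, hq, rfl⟩ := extremePoints_convexHull_subset hx
      exact ⟨q, Finset.mem_coe.mpr (Finset.mem_filter.mpr ⟨hq, hx⟩), rfl⟩
    · rintro ⟨q, hq, rfl⟩
      exact (Finset.mem_filter.mp (Finset.mem_coe.mp hq)).2
  have hcl : IsClosed (convexHull ℝ (coeR n '' ↑(extVerts Pset))) :=
    (((extVerts Pset).finite_toSet.image (coeR n)).isCompact_convexHull ℝ).isClosed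
  rw [hexteq, hcl.closure_eq] at hKM
  exact hKM.symm

open Classical in
lemma hard (Pset : Finset (Fin n → ℤ))
    (hsat : ∀ m ∈ latticePts n Pset, coeR n m ∈ Set.extremePoints ℝ (polyHull n Pset) →
      SaturatedIn n (shiftMonoid n Pset m)) :
    VeryAmplePoly n Pset := by
  rcases Pset.eq_empty_or_nonempty with rfl | hne
  · refine ⟨1, fun k hk m hm => absurd hm ?_⟩
    simp [polyHull, Set.smul_set_empty]
  set V := extVerts Pset with hV
  have hVPset : ∀ q ∈ V, q ∈ Pset := fun q hq => (Finset.mem_filter.mp hq).1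
  have hVlat : ∀ q ∈ V, q ∈ latticePts n Pset := fun q hq =>
    mem_latticePts_of_mem_Pset Pset (hVPset q hq)
  have hVext : ∀ q ∈ V, coeR n q ∈ Set.extremePoints ℝ (polyHull n Pset) := fun q hq =>
    (Finset.mem_filter.mp hq).2
  have hhull := polyHull_eq_vertHull Pset
  have hVne : V.Nonempty := by
    rcases hne with ⟨p, hp⟩
    by_contra h
    rw [Finset.not_nonempty_iff_eq_empty] at h
    have hmem : coeR n p ∈ polyHull n Pset := mem_latticePts_of_mem_Pset Pset hp
    rw [hhull, ← hV, h] at hmem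
    simp at hmem
  set boxC : (Fin n → ℤ) → (Fin n → ℤ) := fun w i => ∑ q ∈ Pset, |q i - w i| with hboxC
  set lenB : ℕ :=
    V.sup (fun w => (Finset.Icc (fun i => -(boxC w i)) (boxC w)).sup (lenOf Pset w)) with hlenB
  refine ⟨(lenB + 1) * V.card, fun k hk m hm => ?_⟩
  have hVcard : 0 < V.card := Finset.card_pos.mpr hVne
  have hk1 : 1 ≤ k := le_trans (Nat.mul_pos (Nat.succ_pos lenB) hVcard) hk
  obtain ⟨y, hy, hym⟩ := hm
  rw [hhull, ← Finset.coe_image, Finset.convexHull_eq] at hy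
  obtain ⟨w, hw0, hw1, hwc⟩ := hy
  rw [Finset.centerMass_eq_of_sum_1 _ _ hw1] at hwc
  have hinj' : ∀ x ∈ V, ∀ y ∈ V, coeR n x = coeR n y → x = y := fun a _ b _ h => coeR_inj h
  set μ : (Fin n → ℤ) → ℝ := fun q => (k : ℝ) * w (coeR n q) with hμ
  have hμ0 : ∀ q ∈ V, 0 ≤ μ q := fun q hq =>
    mul_nonneg (Nat.cast_nonneg k) (hw0 _ (Finset.mem_image_of_mem _ hq))
  have hμsum : ∑ q ∈ V, μ q = (k : ℝ) := by
    rw [Finset.sum_image hinj'] at hw1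
    simp only [hμ, ← Finset.mul_sum, hw1, mul_one]
  have hμrep : coeR n m = ∑ q ∈ V, μ q • coeR n q := by
    rw [Finset.sum_image hinj'] at hwc
    rw [← hym]
    show (k : ℝ) • y = _
    rw [← hwc, Finset.smul_sum]
    exact Finset.sum_congr rfl fun q hq => by rw [id_eq, smul_smul]
  obtain ⟨v, hvV, hvmax⟩ := V.exists_max_image μ hVne
  have hvsat := hsat v (hVlat v hvV) (hVext v hvV)
  have hvavg : (k : ℝ) / V.card ≤ μ v := by
    rw [div_le_iff₀ (by exact_mod_cast hVcard)]
    have h1 : ∑ q ∈ V, μ q ≤ V.card • μ v :=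
      Finset.sum_le_card_nsmul _ _ _ (fun q hq => hvmax q hq)
    rw [hμsum] at h1
    simpa [nsmul_eq_mul, mul_comm] using h1
  set E := V.erase v with hE
  set a : (Fin n → ℤ) → ℕ := fun q => ⌊μ q⌋₊ with ha
  set T : ℕ := ∑ q ∈ E, a q with hT
  have hElat : ∀ q ∈ E, q ∈ latticePts n Pset := fun q hq =>
    hVlat q (Finset.mem_of_mem_erase hq)
  have hμ0E : ∀ q ∈ E, 0 ≤ μ q := fun q hq => hμ0 q (Finset.mem_of_mem_erase hq)
  have hTle : (T : ℝ) ≤ (k : ℝ) - μ v := by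
    have h2 : ∀ q ∈ E, (a q : ℝ) ≤ μ q := fun q hq => Nat.floor_le (hμ0E q hq)
    have h3 : ∑ q ∈ E, μ q = (k : ℝ) - μ v := by
      rw [hE, Finset.sum_erase_eq_sub hvV, hμsum]
    calc (T : ℝ) = ∑ q ∈ E, (a q : ℝ) := by rw [hT]; push_cast; rfl
      _ ≤ ∑ q ∈ E, μ q := Finset.sum_le_sum h2
      _ = (k : ℝ) - μ v := h3
  set rhat : Fin n → ℤ := m - (k : ℤ) • v - ∑ q ∈ E, (a q : ℤ) • (q - v) with hrhat
  have hrrep : coeR n rhat = ∑ q ∈ E, (μ q - a q) • (coeR n q - coeR n v) := by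
    have e0 : coeR n m - (k : ℝ) • coeR n v = ∑ q ∈ E, μ q • (coeR n q - coeR n v) := by
      have e1 : ∑ q ∈ V, μ q • (coeR n q - coeR n v)
          = ∑ q ∈ E, μ q • (coeR n q - coeR n v) := by
        rw [hE]
        exact (Finset.sum_erase _ (by simp)).symm
      rw [← e1, hμrep, ← hμsum, Finset.sum_smul, ← Finset.sum_sub_distrib]
      exact Finset.sum_congr rfl fun q hq => by rw [smul_sub]
    have e2 : coeR n rhat = coeR n m - (k : ℝ) • coeR n v
        - ∑ q ∈ E, (a q : ℝ) • (coeR n q - coeR n v) := by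
      have h2 : coeR n (∑ q ∈ E, (a q : ℤ) • (q - v))
          = ∑ q ∈ E, (a q : ℝ) • (coeR n q - coeR n v) := by
        show coeHom n _ = _
        rw [map_sum]
        refine Finset.sum_congr rfl fun q hq => ?_
        rw [coeHom_apply, coeR_zsmul, coeR_sub]
        norm_num
      have h3 : coeR n ((k : ℤ) • v) = (k : ℝ) • coeR n v := by
        rw [coeR_zsmul]; norm_num
      show coeHom n rhat = _
      rw [hrhat, map_sub, map_sub, coeHom_apply, coeHom_apply, coeHom_apply, h2, h3]
    rw [e2, e0, ← Finset.sum_sub_distrib]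
    exact Finset.sum_congr rfl fun q hq => by rw [← sub_smul]
  have hrS : rhat ∈ shiftMonoid n Pset v := by
    refine mem_shiftMonoid_of_cone Pset v hvsat E hElat (fun q => μ q - a q) ?_ rhat hrrep
    intro q hq
    have := Nat.floor_le (hμ0E q hq)
    simp only [ha]
    linarith
  have hrbox : rhat ∈ Finset.Icc (fun i => -(boxC v i)) (boxC v) := by
    rw [Finset.mem_Icc]
    have habs : ∀ i, |rhat i| ≤ boxC v i := by
      intro i
      have h1 : ((rhat i : ℤ) : ℝ)
          = ∑ q ∈ E, (μ q - a q) * ((q i : ℝ) - (v i : ℝ)) := by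
        have h := congrFun hrrep i
        simpa [coeR, Finset.sum_apply, Pi.smul_apply, smul_eq_mul, Pi.sub_apply] using h
      have h2 : |((rhat i : ℤ) : ℝ)| ≤ ((boxC v i : ℤ) : ℝ) := by
        rw [h1]
        calc |∑ q ∈ E, (μ q - a q) * ((q i : ℝ) - (v i : ℝ))|
            ≤ ∑ q ∈ E, |(μ q - a q) * ((q i : ℝ) - (v i : ℝ))| :=
              Finset.abs_sum_le_sum_abs _ _
          _ ≤ ∑ q ∈ E, |(q i : ℝ) - (v i : ℝ)| := by
              refine Finset.sum_le_sum fun q hq => ?_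
              rw [abs_mul]
              have hfl := Nat.floor_le (hμ0E q hq)
              have hfu := Nat.lt_floor_add_one (μ q)
              have hc : |μ q - a q| ≤ 1 := by
                rw [abs_le]; constructor <;> simp only [ha] <;> [linarith; linarith]
              nlinarith [abs_nonneg ((q i : ℝ) - (v i : ℝ))]
          _ ≤ ∑ q ∈ Pset, |(q i : ℝ) - (v i : ℝ)| := by
              refine Finset.sum_le_sum_of_subset_of_nonneg ?_ (fun q _ _ => abs_nonneg _)
              intro q hq
              exact hVPset q (Finset.mem_of_mem_erase hq)
          _ = ((boxC v i : ℤ) : ℝ) := by simp only [hboxC]; push_cast; rfl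
      exact_mod_cast h2
    constructor <;> intro i
    · simpa [neg_le] using (abs_le.mp (habs i)).1
    · exact (abs_le.mp (habs i)).2
  obtain ⟨l, hlG, hlsum, hllen⟩ := lenOf_spec hrS
  have hlen_le : l.length ≤ lenB := by
    rw [hllen]
    calc lenOf Pset v rhat
        ≤ (Finset.Icc (fun i => -(boxC v i)) (boxC v)).sup (lenOf Pset v) :=
          Finset.le_sup (f := lenOf Pset v) hrbox
      _ ≤ lenB := by
          rw [hlenB]
          exact Finset.le_sup
            (f := fun w => (Finset.Icc (fun i => -(boxC w i)) (boxC w)).sup (lenOf Pset w)) hvV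
  have hcount : T + lenB + 1 ≤ k := by
    have hdiv : ((lenB : ℝ) + 1) ≤ (k : ℝ) / V.card := by
      rw [le_div_iff₀ (by exact_mod_cast hVcard)]
      calc ((lenB : ℝ) + 1) * V.card = (((lenB + 1) * V.card : ℕ) : ℝ) := by push_cast; ring
        _ ≤ (k : ℝ) := by exact_mod_cast hk
    have : (T : ℝ) + ((lenB : ℝ) + 1) ≤ (k : ℝ) := by linarith [hTle, le_trans hdiv hvavg]
    exact_mod_cast this
  have hcount' : T + l.length + 1 ≤ k := by omega
  set L₁ : List (Fin n → ℤ) := E.toList.flatMap (fun q => List.replicate (a q) q) with hL₁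
  set L₂ : List (Fin n → ℤ) := l.map (fun z => z + v) with hL₂
  set L₃ : List (Fin n → ℤ) := List.replicate (k - (T + l.length)) v with hL₃
  set L := L₁ ++ L₂ ++ L₃ with hLdef
  have hL1len : L₁.length = T := by
    rw [hL₁, List.length_flatMap]
    simp only [Function.comp_def, List.length_replicate]
    rw [hT]
    exact Finset.sum_map_toList E a
  have hL1sum : L₁.sum = ∑ q ∈ E, a q • q := by
    rw [hL₁, flatMap_replicate_sum]
    exact Finset.sum_map_toList E (fun q => a q • q)
  have hL2len : L₂.length = l.length := by rw [hL₂, List.length_map]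
  have hL2sum : L₂.sum = rhat + l.length • v := by rw [hL₂, list_map_add_sum, hlsum]
  have hL3len : L₃.length = k - (T + l.length) := by rw [hL₃, List.length_replicate]
  have hL3sum : L₃.sum = (k - (T + l.length)) • v := by rw [hL₃, List.sum_replicate]
  have hLlen : L.length = k := by
    rw [hLdef, List.length_append, List.length_append, hL1len, hL2len, hL3len]
    omega
  have hmemL : ∀ z ∈ L, z ∈ latticePts n Pset := by
    intro z hz
    rw [hLdef] at hz
    simp only [List.mem_append] at hz
    rcases hz with (hz | hz) | hz
    · rw [hL₁, List.mem_flatMap] at hz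
      obtain ⟨q, hq, hz⟩ := hz
      rw [List.eq_of_mem_replicate hz]
      exact hElat q (Finset.mem_toList.mp hq)
    · rw [hL₂, List.mem_map] at hz
      obtain ⟨z', hz', rfl⟩ := hz
      obtain ⟨p, hp, rfl⟩ := hlG z' hz'
      simpa using hp
    · rw [hL₃] at hz
      rw [List.eq_of_mem_replicate hz]
      exact hVlat v hvV
  have hLsum : L.sum = m := by
    rw [hLdef, List.sum_append, List.sum_append, hL1sum, hL2sum, hL3sum]
    have hsplit : m = rhat + (k : ℤ) • v + ∑ q ∈ E, (a q : ℤ) • (q - v) := by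
      rw [hrhat]; abel
    have h5 : ∑ q ∈ E, (a q : ℤ) • (q - v) = (∑ q ∈ E, a q • q) - T • v := by
      have : ∀ q ∈ E, (a q : ℤ) • (q - v) = a q • q - a q • v := by
        intro q hq
        rw [natCast_zsmul, smul_sub]
      rw [Finset.sum_congr rfl this, Finset.sum_sub_distrib, ← Finset.sum_smul, hT]
    have h6 : (k : ℤ) • v = T • v + l.length • v + (k - (T + l.length)) • v := by
      rw [natCast_zsmul, ← add_smul, ← add_smul]
      congr 1
      omega
    rw [hsplit, h5, h6]
    abel
  refine ⟨fun i => L.get (Fin.cast hLlen.symm i), fun i => hmemL _ (L.get_mem _), ?_⟩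
  have h9 : ∑ i : Fin L.length, L.get i = L.sum := by
    conv_rhs => rw [← List.ofFn_get L]
    exact (Fin.sum_ofFn _).symm
  have h8 : ∑ i : Fin k, L.get (Fin.cast hLlen.symm i) = L.sum := by
    rw [Fin.sum_congr' L.get hLlen.symm, h9]
  rw [h8, hLsum]

lemma easy (Pset : Finset (Fin n → ℤ)) (hva : VeryAmplePoly n Pset) :
    ∀ m ∈ latticePts n Pset, SaturatedIn n (shiftMonoid n Pset m) := by
  obtain ⟨N, hN⟩ := hva
  intro m hm x k hk hkx
  obtain ⟨l, hlG, hlsum⟩ := exists_list_of_mem_closure hkx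
  rcases Nat.eq_zero_or_pos l.length with hl0 | hlpos
  · rw [List.length_eq_zero_iff] at hl0
    subst hl0
    have h0 : k • x = 0 := hlsum.symm
    have hx : x = 0 := by
      funext i
      have h1 : k * x i = 0 := congrFun h0 i
      rcases mul_eq_zero.mp h1 with h | h
      · omega
      · exact h
    rw [hx]
    exact zero_mem _
  · set t := N + l.length with ht
    set L := l.length with hL
    have hkk : (1 : ℤ) ≤ k := hk
    have htL : (L : ℤ) ≤ (t : ℤ) := by simp [ht, hL]
    have htnn : (0 : ℤ) ≤ (t : ℤ) := by positivity
    have hc₀' : (0 : ℤ) ≤ k * (t : ℤ) - (L : ℤ) := by nlinarith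
    have hid : (k : ℤ) • (x + (t : ℕ) • m)
        = (l.map (fun z => z + m)).sum + (k * (t : ℤ) - (L : ℤ)) • m := by
      rw [list_map_add_sum, hlsum]
      have e1 : (k : ℤ) • (x + (t : ℕ) • m) = (k : ℤ) • x + (k * (t : ℤ)) • m := by
        rw [smul_add, ← natCast_zsmul m t, smul_smul]
      have e2 : l.length • m = ((L : ℤ)) • m := by rw [← hL, natCast_zsmul]
      rw [e1, e2, sub_smul]
      abel
    set g : List (Fin n → ℝ) := l.map (fun z => coeR n (z + m)) with hg
    have hgmem : ∀ u ∈ g, u ∈ polyHull n Pset := by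
      intro u hu
      rw [hg, List.mem_map] at hu
      obtain ⟨z, hz, rfl⟩ := hu
      obtain ⟨p, hp, rfl⟩ := hlG z hz
      simpa [latticePts] using hp
    set s : Fin n → ℝ := g.sum with hs
    have hglen : g.length = L := by rw [hg, List.length_map]
    have hsum_fin : s = ∑ i : Fin L, g.get (Fin.cast hglen.symm i) := by
      rw [Fin.sum_congr' g.get hglen.symm]
      rw [hs]
      conv_lhs => rw [← List.ofFn_get g]
      exact Fin.sum_ofFn _
    set b : Fin n → ℝ := (L : ℝ)⁻¹ • s with hb
    have hLpos : (0 : ℝ) < L := by exact_mod_cast hlpos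
    have hLne : (L : ℝ) ≠ 0 := ne_of_gt hLpos
    have hbmem : b ∈ polyHull n Pset := by
      rw [hb, hsum_fin, Finset.smul_sum]
      refine (convex_convexHull ℝ _).sum_mem (fun i _ => by positivity) ?_
        (fun i _ => hgmem _ (g.get_mem _))
      rw [Finset.sum_const, Finset.card_univ, Fintype.card_fin, nsmul_eq_mul]
      field_simp
    have hKpos : (0 : ℝ) < (k : ℝ) := by exact_mod_cast hk
    have hkne : (k : ℝ) ≠ 0 := ne_of_gt hKpos
    have htpos : (0 : ℝ) < ((t : ℕ) : ℝ) := by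
      have h9 : 0 < t := by omega
      exact_mod_cast h9
    have htne : ((t : ℕ) : ℝ) ≠ 0 := ne_of_gt htpos
    set c₀ : ℝ := ((k * (t : ℤ) - (L : ℤ) : ℤ) : ℝ) with hc₀def
    have hc₀nn : 0 ≤ c₀ := by rw [hc₀def]; exact_mod_cast hc₀'
    have hreal : (k : ℝ) • coeR n (x + (t : ℕ) • m) = s + c₀ • coeR n m := by
      have h1 : coeR n ((k : ℤ) • (x + (t : ℕ) • m))
          = coeR n ((l.map (fun z => z + m)).sum + (k * (t : ℤ) - (L : ℤ)) • m) := by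
        rw [hid]
      rw [coeR_zsmul] at h1
      rw [h1]
      show coeHom n ((l.map (fun z => z + m)).sum + (k * (t : ℤ) - (L : ℤ)) • m)
        = s + c₀ • coeR n m
      rw [map_add, map_list_sum, List.map_map]
      have e4 : (l.map ((coeHom n) ∘ fun z => z + m)).sum = s := by rw [hs, hg]; rfl
      have e5 : coeHom n ((k * (t : ℤ) - (L : ℤ)) • m) = c₀ • coeR n m := by
        rw [coeHom_apply, coeR_zsmul, hc₀def]
      rw [e4, e5]
    set c : Fin n → ℝ :=
      ((L : ℝ) / ((k : ℝ) * (t : ℕ))) • b + (c₀ / ((k : ℝ) * (t : ℕ))) • coeR n m with hcdef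
    have hcmem : c ∈ polyHull n Pset := by
      refine (convex_convexHull ℝ _) hbmem hm (by positivity) (by positivity) ?_
      rw [← add_div, hc₀def]
      push_cast
      field_simp
      ring
    have htc : ((t : ℕ) : ℝ) • c = coeR n (x + (t : ℕ) • m) := by
      have hcoe : coeR n (x + (t : ℕ) • m) = (k : ℝ)⁻¹ • (s + c₀ • coeR n m) := by
        rw [← hreal, smul_smul, inv_mul_cancel₀ hkne, one_smul]
      rw [hcoe, hcdef, hb]
      simp only [smul_add, smul_smul]
      congr 1
      · congr 1
        field_simp
      · congr 1
        field_simp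
    have hmem' : coeR n (x + (t : ℕ) • m) ∈ ((t : ℕ) : ℝ) • polyHull n Pset :=
      Set.mem_smul_set.mpr ⟨c, hcmem, htc⟩
    obtain ⟨f, hf, hfsum⟩ := hN t (by omega) _ hmem'
    have hfx : x = ∑ i : Fin t, (f i - m) := by
      rw [Finset.sum_sub_distrib, ← hfsum, Finset.sum_const, Finset.card_univ, Fintype.card_fin]
      abel
    rw [hfx]
    refine AddSubmonoid.sum_mem _ fun i _ => ?_
    exact AddSubmonoid.subset_closure
      (show f i - m ∈ {y : Fin n → ℤ | ∃ p ∈ latticePts n Pset, y = p - m} from ⟨f i, hf i, rfl⟩)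
end Stmt18


/-- For a lattice polytope spanning the lattice `ℤⁿ`, the following are
equivalent: (1) the polytope is very ample; (2) for every lattice point `m` of
`P` the monoid generated by `P ∩ ℤⁿ − m` is saturated; (3) the same for every
vertex `m` of `P`. -/
theorem stmt_18 (n : ℕ) (Pset : Finset (Fin n → ℤ))
    (hspan : AddSubgroup.closure
      {x : Fin n → ℤ | ∃ p ∈ latticePts n Pset, ∃ q ∈ latticePts n Pset, x = p - q} = ⊤) :
    (VeryAmplePoly n Pset ↔
      ∀ m ∈ latticePts n Pset, SaturatedIn n (shiftMonoid n Pset m)) ∧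
    (VeryAmplePoly n Pset ↔
      ∀ m ∈ latticePts n Pset,
        coeR n m ∈ Set.extremePoints ℝ (polyHull n Pset) →
        SaturatedIn n (shiftMonoid n Pset m)) := by
  constructor
  · constructor
    · exact fun h => Stmt18.easy Pset h
    · exact fun h => Stmt18.hard Pset (fun m hm _ => h m hm)
  · constructor
    · exact fun h m hm _ => Stmt18.easy Pset h m hm
    · exact fun h => Stmt18.hard Pset h
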